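/- Amitsur exactness for a faithfully flat algebra: let R be a commutative ring, A a commutative R-algebra that is faithfully flat as an R-module, and M an R-module. Consider the R-linear maps d₀ : M ⊗[R] A → M ⊗[R] A ⊗[R] A determined by m ⊗ a ↦ m ⊗ a ⊗ 1 − m ⊗ 1 ⊗ a, and d₁ : M ⊗[R] A ⊗[R] A → M ⊗[R] A ⊗[R] A ⊗[R] A determined by m ⊗ a ⊗ b ↦ m ⊗ a ⊗ b ⊗ 1 − m ⊗ a ⊗ 1 ⊗ b + m ⊗ 1 ⊗ a ⊗ b. Then the sequence is exact at the middle term: the kernel of d₁ equals the range of d₀. -/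
import Mathlib

open scoped TensorProduct

/-- Contraction `(N ⊗ A) ⊗ A → N ⊗ A`, `(n ⊗ b) ⊗ c ↦ n ⊗ (b*c)`. -/
noncomputable def amitsurContr (R : Type*) [CommRing R] (A : Type*) [CommRing A] [Algebra R A]
    (N : Type*) [AddCommGroup N] [Module R N] :
    (N ⊗[R] A) ⊗[R] A →ₗ[R] N ⊗[R] A :=
  LinearMap.lTensor N (LinearMap.mul' R A) ∘ₗ (TensorProduct.assoc R N A A).toLinearMap

@[simp] lemma amitsurContr_tmul (R : Type*) [CommRing R] (A : Type*) [CommRing A] [Algebra R A]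
    (N : Type*) [AddCommGroup N] [Module R N] (n : N) (b c : A) :
    amitsurContr R A N ((n ⊗ₜ b) ⊗ₜ c) = n ⊗ₜ (b * c) := rfl

set_option maxSynthPendingDepth 3 in
theorem stmt14 {R : Type*} [CommRing R] (A : Type*) [CommRing A] [Algebra R A]
    [Module.FaithfullyFlat R A] (M : Type*) [AddCommGroup M] [Module R M] :
    LinearMap.ker
      ((TensorProduct.mk R ((M ⊗[R] A) ⊗[R] A) A).flip 1
        - LinearMap.rTensor A ((TensorProduct.mk R (M ⊗[R] A) A).flip 1)
        + LinearMap.rTensor A (LinearMap.rTensor A ((TensorProduct.mk R M A).flip 1)))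
    = LinearMap.range
        ((TensorProduct.mk R (M ⊗[R] A) A).flip 1
          - LinearMap.rTensor A ((TensorProduct.mk R M A).flip 1)) := by
  set d0 : M ⊗[R] A →ₗ[R] (M ⊗[R] A) ⊗[R] A :=
    (TensorProduct.mk R (M ⊗[R] A) A).flip 1
      - LinearMap.rTensor A ((TensorProduct.mk R M A).flip 1) with hd0
  set d1 : (M ⊗[R] A) ⊗[R] A →ₗ[R] ((M ⊗[R] A) ⊗[R] A) ⊗[R] A :=
    (TensorProduct.mk R ((M ⊗[R] A) ⊗[R] A) A).flip 1
      - LinearMap.rTensor A ((TensorProduct.mk R (M ⊗[R] A) A).flip 1)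
      + LinearMap.rTensor A (LinearMap.rTensor A ((TensorProduct.mk R M A).flip 1)) with hd1
  have hd0t : ∀ (m : M) (a : A), d0 (m ⊗ₜ a) = (m ⊗ₜ a) ⊗ₜ 1 - (m ⊗ₜ (1:A)) ⊗ₜ a := by
    intro m a; simp [hd0]
  have hd1t : ∀ (m : M) (a b : A),
      d1 ((m ⊗ₜ a) ⊗ₜ b)
        = ((m ⊗ₜ a) ⊗ₜ b) ⊗ₜ 1 - ((m ⊗ₜ a) ⊗ₜ (1:A)) ⊗ₜ b + ((m ⊗ₜ (1:A)) ⊗ₜ a) ⊗ₜ b := by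
    intro m a b; simp [hd1]
  have key : Function.Exact d0 d1 := by
    refine Module.FaithfullyFlat.rTensor_reflects_exact R A d0 d1 ?_
    -- homotopy identity
    set s1 : ((M ⊗[R] A) ⊗[R] A) ⊗[R] A →ₗ[R] (M ⊗[R] A) ⊗[R] A :=
      amitsurContr R A (M ⊗[R] A)
    set s2 : (((M ⊗[R] A) ⊗[R] A) ⊗[R] A) ⊗[R] A →ₗ[R] ((M ⊗[R] A) ⊗[R] A) ⊗[R] A :=
      amitsurContr R A ((M ⊗[R] A) ⊗[R] A)
    have homotopy : s2 ∘ₗ d1.rTensor A + (d0.rTensor A) ∘ₗ s1 = LinearMap.id := by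
      ext m a b c
      show s2 ((d1 ((m ⊗ₜ a) ⊗ₜ b)) ⊗ₜ c) + (d0.rTensor A) (s1 (((m ⊗ₜ a) ⊗ₜ b) ⊗ₜ c)) = ((m ⊗ₜ a) ⊗ₜ b) ⊗ₜ c
      rw [hd1t]
      show _ = _
      rw [show s1 (((m ⊗ₜ[R] a) ⊗ₜ[R] b) ⊗ₜ[R] c) = (m ⊗ₜ a) ⊗ₜ (b*c) from rfl]
      simp only [TensorProduct.sub_tmul, TensorProduct.add_tmul, map_sub, map_add,
        amitsurContr_tmul, one_mul, mul_one, LinearMap.rTensor_tmul, hd0t, s2,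
        TensorProduct.sub_tmul]
      abel
    have complex : (d1.rTensor A) ∘ₗ (d0.rTensor A) = 0 := by
      rw [← LinearMap.rTensor_comp]
      have : d1 ∘ₗ d0 = 0 := by
        ext m a
        show d1 (d0 (m ⊗ₜ a)) = 0
        rw [hd0t, map_sub, hd1t, hd1t]
        abel
      rw [this, LinearMap.rTensor_zero]
    rw [LinearMap.exact_iff]
    apply le_antisymm
    · intro y hy
      have := congr($homotopy y)
      simp only [LinearMap.add_apply, LinearMap.coe_comp, Function.comp_apply,
        LinearMap.id_apply] at this
      rw [LinearMap.mem_ker] at hy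
      rw [hy, map_zero, zero_add] at this
      exact ⟨s1 y, this⟩
    · rintro _ ⟨x, rfl⟩
      rw [LinearMap.mem_ker, ← LinearMap.comp_apply, complex, LinearMap.zero_apply]
  rw [LinearMap.exact_iff] at key
  exact key
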